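/- arXiv:0802.2111 — 3 statements merged into one kernel-verified Lean document; each statement's English description precedes it below -/
import Mathlib

section
/- Let p > 2 and set α = 1 − 2/p ∈ (0, 1). Let C₅ > 0 and let Φ : ℂ × ℂ → ℂ be measurable with |Φ(c, w)| ≤ C₅ for all (c, w) and Φ(c, w) = 0 whenever |c| ≥ 1. Then there exists a constant H > 0 depending only on C₅ and p (and not on f) such that for every bounded continuous f : ℂ → ℂ and all c, c′ ∈ ℂ, |𝒦f(c) − 𝒦f(c′)| ≤ H |c − c′|^{α}. -/
open MeasureTheory
open Metric Set


/-- measurability of `x ↦ ‖x‖ ^ (-s)` for `0 ≤ s`. -/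
lemma meas_norm_rpow_neg {s : ℝ} (hs0 : 0 ≤ s) (c : ℂ) :
    Measurable fun x : ℂ => ‖x - c‖ ^ (-s) := by
  have h : (fun x : ℂ => ‖x - c‖ ^ (-s)) = fun x => (‖x - c‖ ^ s)⁻¹ :=
    funext fun x => Real.rpow_neg (norm_nonneg _) s
  rw [h]
  exact (((Real.continuous_rpow_const hs0).comp
    (continuous_norm.comp (continuous_id.sub continuous_const))).measurable).inv

/-- Integrability of the negative power of the norm on the unit ball of `ℂ`. -/
lemma integrableOn_rpow_ball {s : ℝ} (hs0 : 0 ≤ s) (hs2 : s < 2) :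
    IntegrableOn (fun x : ℂ => ‖x‖ ^ (-s)) (ball (0:ℂ) 1) := by
  have hmeas : Measurable fun x : ℂ => ‖x‖ ^ (-s) := by
    simpa using meas_norm_rpow_neg hs0 0
  refine ⟨hmeas.aestronglyMeasurable, ?_⟩
  rw [hasFiniteIntegral_iff_norm]
  set A : ℕ → Set ℂ := fun n => ball (0:ℂ) ((2:ℝ)⁻¹ ^ n) \ ball 0 ((2:ℝ)⁻¹ ^ (n+1)) with hA
  have hcov : ball (0:ℂ) 1 ⊆ {0} ∪ ⋃ n, A n := by
    intro x hx
    rcases eq_or_ne x 0 with h0 | h0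
    · exact Or.inl (by simp [h0])
    have hx0 : 0 < ‖x‖ := norm_pos_iff.mpr h0
    have hx1 : ‖x‖ < 1 := mem_ball_zero_iff.mp hx
    have hex : ∃ n, (2:ℝ)⁻¹ ^ (n+1) ≤ ‖x‖ := by
      obtain ⟨k, hk⟩ := exists_pow_lt_of_lt_one hx0 (by norm_num : (2:ℝ)⁻¹ < 1)
      exact ⟨k, le_of_lt (lt_of_le_of_lt (by
        apply pow_le_pow_of_le_one (by norm_num) (by norm_num) (Nat.le_succ k)) hk)⟩
    classical
    set n := Nat.find hex with hn
    have h1 : (2:ℝ)⁻¹ ^ (n+1) ≤ ‖x‖ := Nat.find_spec hex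
    have h2 : ‖x‖ < (2:ℝ)⁻¹ ^ n := by
      rcases Nat.eq_zero_or_pos n with h | h
      · simpa [h] using hx1
      · have := Nat.find_min hex (m := n - 1) (by omega)
        push_neg at this
        have : ¬ ((2:ℝ)⁻¹ ^ (n - 1 + 1) ≤ ‖x‖) := Nat.find_min hex (by omega)
        push_neg at this
        simpa [Nat.sub_add_cancel h] using this
    refine Or.inr (mem_iUnion.mpr ⟨n, ?_⟩)
    exact ⟨mem_ball_zero_iff.mpr h2, fun hmem => absurd (mem_ball_zero_iff.mp hmem) (not_lt.mpr h1)⟩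
  set V := volume (ball (0:ℂ) 1) with hV
  have hVlt : V < ⊤ := measure_ball_lt_top
  have key : ∀ n : ℕ, (∫⁻ x in A n, ENNReal.ofReal ‖‖x‖ ^ (-s)‖) ≤
      ENNReal.ofReal ((2:ℝ) ^ s) * ENNReal.ofReal ((2:ℝ) ^ (s - 2)) ^ n * V := by
    intro n
    have hposb : (0:ℝ) < (2:ℝ)⁻¹ ^ (n+1) := by positivity
    have hbound : ∀ x ∈ A n, ENNReal.ofReal ‖‖x‖ ^ (-s)‖ ≤
        ENNReal.ofReal (((2:ℝ)⁻¹ ^ (n+1)) ^ (-s)) := by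
      intro x hx
      have hxge : (2:ℝ)⁻¹ ^ (n+1) ≤ ‖x‖ := by
        have := hx.2
        rw [mem_ball_zero_iff] at this
        exact not_lt.mp this
      have h1 : ‖x‖ ^ (-s) ≤ ((2:ℝ)⁻¹ ^ (n+1)) ^ (-s) :=
        Real.rpow_le_rpow_of_nonpos hposb hxge (neg_nonpos.mpr hs0)
      have h2 : ‖‖x‖ ^ (-s)‖ = ‖x‖ ^ (-s) := by
        rw [Real.norm_eq_abs, abs_of_nonneg (Real.rpow_nonneg (norm_nonneg x) _)]
      rw [h2]
      exact ENNReal.ofReal_le_ofReal h1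
    have hAm : MeasurableSet (A n) := measurableSet_ball.diff measurableSet_ball
    calc (∫⁻ x in A n, ENNReal.ofReal ‖‖x‖ ^ (-s)‖)
        ≤ ∫⁻ _x in A n, ENNReal.ofReal (((2:ℝ)⁻¹ ^ (n+1)) ^ (-s)) := by
          apply setLIntegral_mono' hAm hbound
      _ = ENNReal.ofReal (((2:ℝ)⁻¹ ^ (n+1)) ^ (-s)) * volume (A n) := by
          rw [setLIntegral_const]
      _ ≤ ENNReal.ofReal (((2:ℝ)⁻¹ ^ (n+1)) ^ (-s)) * volume (ball (0:ℂ) ((2:ℝ)⁻¹ ^ n)) := by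
          gcongr
          exact diff_subset
      _ = ENNReal.ofReal (((2:ℝ)⁻¹ ^ (n+1)) ^ (-s)) *
            (ENNReal.ofReal (((2:ℝ)⁻¹ ^ n) ^ Module.finrank ℝ ℂ) * V) := by
          rw [Measure.addHaar_ball volume 0 (by positivity : (0:ℝ) ≤ (2:ℝ)⁻¹ ^ n)]
      _ = ENNReal.ofReal ((2:ℝ) ^ s) * ENNReal.ofReal ((2:ℝ) ^ (s - 2)) ^ n * V := by
          rw [Complex.finrank_real_complex, ← mul_assoc,
            ← ENNReal.ofReal_mul (by positivity),
            ← ENNReal.ofReal_pow (by positivity),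
            ← ENNReal.ofReal_mul (by positivity)]
          congr 1
          have e1 : ((2:ℝ)⁻¹ ^ (n+1)) ^ (-s) = (2:ℝ) ^ (s * (n+1)) := by
            rw [← Real.rpow_natCast ((2:ℝ)⁻¹) (n+1), ← Real.rpow_mul (by norm_num),
              Real.inv_rpow (by norm_num), ← Real.rpow_neg (by norm_num)]
            congr 1
            push_cast
            ring
          have e2 : ((2:ℝ)⁻¹ ^ n) ^ 2 = (2:ℝ) ^ ((-2 : ℝ) * n) := by
            rw [← pow_mul, ← Real.rpow_natCast ((2:ℝ)⁻¹) (n * 2),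
              Real.inv_rpow (by norm_num), ← Real.rpow_neg (by norm_num)]
            congr 1
            push_cast
            ring
          rw [e1, e2, ← Real.rpow_add (by norm_num : (0:ℝ) < 2),
            ← Real.rpow_natCast ((2:ℝ) ^ (s-2)) n, ← Real.rpow_mul (by norm_num : (0:ℝ) ≤ 2),
            ← Real.rpow_add (by norm_num : (0:ℝ) < 2)]
          congr 1
          push_cast
          ring
  have hq : ENNReal.ofReal ((2:ℝ) ^ (s - 2)) < 1 := by
    rw [ENNReal.ofReal_lt_one]
    exact Real.rpow_lt_one_of_one_lt_of_neg (by norm_num) (by linarith)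
  calc (∫⁻ x in ball (0:ℂ) 1, ENNReal.ofReal ‖‖x‖ ^ (-s)‖)
      ≤ ∫⁻ x in {(0:ℂ)} ∪ ⋃ n, A n, ENNReal.ofReal ‖‖x‖ ^ (-s)‖ := lintegral_mono_set hcov
    _ ≤ (∫⁻ x in {(0:ℂ)}, ENNReal.ofReal ‖‖x‖ ^ (-s)‖) +
        ∫⁻ x in ⋃ n, A n, ENNReal.ofReal ‖‖x‖ ^ (-s)‖ := lintegral_union_le _ _ _
    _ ≤ 0 + ∑' n, ∫⁻ x in A n, ENNReal.ofReal ‖‖x‖ ^ (-s)‖ := by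
        gcongr
        · rw [Measure.restrict_singleton]; simp
        · exact lintegral_iUnion_le _ _
    _ ≤ ∑' n, ENNReal.ofReal ((2:ℝ) ^ s) * ENNReal.ofReal ((2:ℝ) ^ (s - 2)) ^ n * V := by
        rw [zero_add]; exact ENNReal.tsum_le_tsum key
    _ < ⊤ := by
        have : ∑' n : ℕ, ENNReal.ofReal ((2:ℝ) ^ s) * ENNReal.ofReal ((2:ℝ) ^ (s - 2)) ^ n * V
            = ENNReal.ofReal ((2:ℝ) ^ s) * (1 - ENNReal.ofReal ((2:ℝ) ^ (s - 2)))⁻¹ * V := by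
          rw [ENNReal.tsum_mul_right, ENNReal.tsum_mul_left, ENNReal.tsum_geometric]
        rw [this]
        refine ENNReal.mul_lt_top (ENNReal.mul_lt_top ENNReal.ofReal_lt_top ?_) hVlt
        rw [ENNReal.inv_lt_top]
        exact tsub_pos_of_lt hq

/-- Translation: integrability and uniform bound of the integral over the unit ball. -/
lemma integrableOn_shift {s : ℝ} (hs0 : 0 ≤ s) (hs2 : s < 2) (c : ℂ) :
    IntegrableOn (fun ζ : ℂ => ‖ζ - c‖ ^ (-s)) (ball (0:ℂ) 1) ∧
    (∫ ζ in ball (0:ℂ) 1, ‖ζ - c‖ ^ (-s)) ≤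
      (∫ x in ball (0:ℂ) 1, ‖x‖ ^ (-s)) + (volume (ball (0:ℂ) 1)).toReal := by
  have hbase := integrableOn_rpow_ball hs0 hs2
  have hind : ((ball c 1).indicator (fun ζ : ℂ => ‖ζ - c‖ ^ (-s))) =
      fun ζ => (ball (0:ℂ) 1).indicator (fun x => ‖x‖ ^ (-s)) (ζ - c) := by
    funext ζ
    by_cases h : ζ ∈ ball c 1
    · rw [indicator_of_mem h, indicator_of_mem]
      rw [mem_ball_zero_iff]
      rw [mem_ball_iff_norm] at h
      exact h
    · rw [indicator_of_notMem h, indicator_of_notMem]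
      rw [mem_ball_zero_iff]
      rw [mem_ball_iff_norm] at h
      exact h
  have hint_c : Integrable ((ball c 1).indicator (fun ζ : ℂ => ‖ζ - c‖ ^ (-s))) := by
    rw [hind]
    exact (hbase.integrable_indicator measurableSet_ball).comp_sub_right c
  have hval : (∫ ζ in ball c 1, ‖ζ - c‖ ^ (-s)) = ∫ x in ball (0:ℂ) 1, ‖x‖ ^ (-s) := by
    rw [← integral_indicator measurableSet_ball, hind,
      integral_sub_right_eq_self ((ball (0:ℂ) 1).indicator (fun x : ℂ => ‖x‖ ^ (-s))) c,
      integral_indicator measurableSet_ball]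
  have hpt : ∀ ζ : ℂ, ‖ζ - c‖ ^ (-s) ≤
      1 + (ball c 1).indicator (fun ζ : ℂ => ‖ζ - c‖ ^ (-s)) ζ := by
    intro ζ
    by_cases h : ζ ∈ ball c 1
    · rw [indicator_of_mem h]; linarith
    · rw [indicator_of_notMem h]
      have h1 : (1:ℝ) ≤ ‖ζ - c‖ := by
        rw [mem_ball_iff_norm, not_lt] at h
        exact h
      have := Real.rpow_le_one_of_one_le_of_nonpos h1 (neg_nonpos.mpr hs0)
      linarith
  have hconst : IntegrableOn (fun _ : ℂ => (1:ℝ)) (ball (0:ℂ) 1) :=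
    integrableOn_const measure_ball_lt_top.ne
  have hImaj : Integrable
      (fun ζ : ℂ => 1 + (ball c 1).indicator (fun ζ : ℂ => ‖ζ - c‖ ^ (-s)) ζ)
      (volume.restrict (ball (0:ℂ) 1)) := hconst.add hint_c.integrableOn
  have hIOn0 : IntegrableOn (fun ζ : ℂ => ‖ζ - c‖ ^ (-s)) (ball (0:ℂ) 1) := by
    refine Integrable.mono' hImaj ((meas_norm_rpow_neg hs0 c).aestronglyMeasurable)
      (Filter.Eventually.of_forall fun ζ => ?_)
    rw [Real.norm_eq_abs, abs_of_nonneg (Real.rpow_nonneg (norm_nonneg _) _)]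
    exact hpt ζ
  refine ⟨hIOn0, ?_⟩
  have hnonneg : 0 ≤ᵐ[volume] (ball c 1).indicator (fun ζ : ℂ => ‖ζ - c‖ ^ (-s)) := by
    refine Filter.Eventually.of_forall fun ζ => ?_
    simp only [Pi.zero_apply]
    exact indicator_nonneg (fun x _ => Real.rpow_nonneg (norm_nonneg _) _) ζ
  calc (∫ ζ in ball (0:ℂ) 1, ‖ζ - c‖ ^ (-s))
      ≤ ∫ ζ in ball (0:ℂ) 1,
          (1 + (ball c 1).indicator (fun ζ : ℂ => ‖ζ - c‖ ^ (-s)) ζ) :=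
        integral_mono hIOn0 hImaj hpt
    _ = (volume (ball (0:ℂ) 1)).toReal +
        ∫ ζ in ball (0:ℂ) 1, (ball c 1).indicator (fun ζ : ℂ => ‖ζ - c‖ ^ (-s)) ζ := by
        rw [integral_add hconst hint_c.integrableOn]
        simp [setIntegral_const, measureReal_def]
    _ ≤ (volume (ball (0:ℂ) 1)).toReal +
        ∫ ζ, (ball c 1).indicator (fun ζ : ℂ => ‖ζ - c‖ ^ (-s)) ζ := by
        gcongr
        exact Measure.restrict_le_self
    _ = (∫ x in ball (0:ℂ) 1, ‖x‖ ^ (-s)) + (volume (ball (0:ℂ) 1)).toReal := by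
        rw [integral_indicator measurableSet_ball, hval]
        ring

/-- The elementary pointwise Hölder-type estimate. -/
lemma holder_pointwise {α : ℝ} (hα0 : 0 < α) (hα1 : α < 1) :
    ∀ δ r t : ℝ, 0 ≤ δ → 0 < r → 0 < t → δ ≤ r + t →
      δ / (r * t) ≤ 2 * δ ^ α * (r ^ (-(1+α)) + t ^ (-(1+α))) := by
  have core : ∀ δ r t : ℝ, 0 ≤ δ → 0 < r → 0 < t → δ ≤ r + t → r ≤ t →
      δ / (r * t) ≤ 2 * δ ^ α * r ^ (-(1+α)) := by
    intro δ r t hδ hr ht hsum hrt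
    rcases eq_or_lt_of_le hδ with h0 | hδpos
    · rw [← h0]
      simp [Real.zero_rpow (ne_of_gt hα0)]
    have hrpow : r ^ (-(1+α)) = (r * r ^ α)⁻¹ := by
      rw [Real.rpow_neg hr.le, Real.rpow_add hr, Real.rpow_one]
    have hrα : (0:ℝ) < r ^ α := Real.rpow_pos_of_pos hr α
    have hδα : (0:ℝ) < δ ^ α := Real.rpow_pos_of_pos hδpos α
    rw [hrpow]
    rcases le_or_gt δ (2*r) with hcase | hcase
    · have h1 : δ / (r * t) ≤ δ / (r * r) := by gcongr
      have hkey : δ * r ^ α ≤ 2 * δ ^ α * r := by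
        have hd : δ ^ (1-α) ≤ 2 * r ^ (1-α) := by
          have c1 : δ ^ (1-α) ≤ (2*r) ^ (1-α) :=
            Real.rpow_le_rpow hδpos.le hcase (by linarith)
          have c2 : (2*r) ^ (1-α) = 2 ^ (1-α) * r ^ (1-α) :=
            Real.mul_rpow (by norm_num) hr.le
          have c3 : (2:ℝ) ^ (1-α) ≤ 2 := by
            have := Real.rpow_le_rpow_of_exponent_le (by norm_num : (1:ℝ) ≤ 2)
              (by linarith : 1 - α ≤ 1)
            rwa [Real.rpow_one] at this
          have hrp : (0:ℝ) ≤ r ^ (1-α) := Real.rpow_nonneg hr.le _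
          nlinarith
        have e1 : δ ^ α * δ ^ (1-α) = δ := by
          rw [← Real.rpow_add hδpos]; norm_num
        have e2 : r ^ (1-α) * r ^ α = r := by
          rw [← Real.rpow_add hr]; norm_num
        calc δ * r ^ α = δ ^ α * δ ^ (1-α) * r ^ α := by rw [e1]
          _ ≤ δ ^ α * (2 * r ^ (1-α)) * r ^ α := by gcongr
          _ = 2 * δ ^ α * r := by linear_combination 2 * δ ^ α * e2
      refine le_trans h1 ?_
      have e : 2 * δ ^ α * (r * r ^ α)⁻¹ = (2 * δ ^ α) / (r * r ^ α) := by ring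
      rw [e, div_le_div_iff₀ (by positivity) (by positivity)]
      nlinarith [mul_le_mul_of_nonneg_right hkey hr.le]
    · have ht2 : δ/2 ≤ t := by linarith
      have h1 : δ / (r * t) ≤ δ / (r * (δ/2)) := by gcongr
      have h2 : δ / (r * (δ/2)) = 2 / r := by
        field_simp
      have h3 : r ^ α ≤ δ ^ α := Real.rpow_le_rpow hr.le (by linarith) hα0.le
      refine le_trans (h1.trans_eq h2) ?_
      have e : 2 * δ ^ α * (r * r ^ α)⁻¹ = (2 * δ ^ α) / (r * r ^ α) := by ring
      rw [e, div_le_div_iff₀ hr (by positivity)]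
      nlinarith
  intro δ r t hδ hr ht hsum
  rcases le_total r t with h | h
  · have hmain := core δ r t hδ hr ht hsum h
    have hnn : 0 ≤ 2 * δ ^ α * t ^ (-(1+α)) := by positivity
    nlinarith [hmain]
  · have hmain := core δ t r hδ ht hr (by linarith) h
    have hnn : 0 ≤ 2 * δ ^ α * r ^ (-(1+α)) := by positivity
    rw [mul_comm r t] at *
    nlinarith [hmain]

/-- The operator `𝒦`:
`𝒦 f (c) = -(1/π) ∬_ℂ Φ(ζ, f(ζ))/(ζ - c) dξ dη`. -/
noncomputable def KOp (Φ : ℂ → ℂ → ℂ) (f : ℂ → ℂ) (c : ℂ) : ℂ :=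
  -(Real.pi)⁻¹ • ∫ ζ : ℂ, Φ ζ (f ζ) / (ζ - c)

/-- Let `p > 2` and `α = 1 - 2/p ∈ (0,1)`. For `C₅ > 0` there is a Hölder
constant `H > 0` depending only on `C₅` and `p` such that for every measurable
`Φ : ℂ × ℂ → ℂ` bounded by `C₅` and vanishing when `|c| ≥ 1`, and every bounded
continuous `f : ℂ → ℂ`, `|𝒦f(c) - 𝒦f(c')| ≤ H |c - c'|^α` for all `c, c' ∈ ℂ`. -/
theorem KOp_holder
    (p : ℝ) (hp : 2 < p) (C₅ : ℝ) (hC₅ : 0 < C₅) :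
    ∃ H : ℝ, 0 < H ∧
      ∀ Φ : ℂ → ℂ → ℂ, Measurable (Function.uncurry Φ) →
        (∀ c w : ℂ, ‖Φ c w‖ ≤ C₅) →
        (∀ c w : ℂ, 1 ≤ ‖c‖ → Φ c w = 0) →
        ∀ f : ℂ → ℂ, Continuous f → (∃ M : ℝ, ∀ c : ℂ, ‖f c‖ ≤ M) →
          ∀ c c' : ℂ, ‖KOp Φ f c - KOp Φ f c'‖ ≤ H * ‖c - c'‖ ^ (1 - 2 / p) := by
  have hp0 : 0 < p := by linarith
  set α : ℝ := 1 - 2 / p with hαdef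
  have hα0 : 0 < α := by
    have : 2 / p < 1 := (div_lt_one hp0).mpr hp
    simp only [hαdef]; linarith
  have hα1 : α < 1 := by
    have : 0 < 2 / p := by positivity
    simp only [hαdef]; linarith
  have hs0 : (0:ℝ) ≤ 1 + α := by linarith
  have hs2 : 1 + α < 2 := by linarith
  set I : ℝ := ∫ x in ball (0:ℂ) 1, ‖x‖ ^ (-(1+α)) with hI
  set V : ℝ := (volume (ball (0:ℂ) 1)).toReal with hVdef
  have hI0 : 0 ≤ I := integral_nonneg fun x => Real.rpow_nonneg (norm_nonneg x) _
  have hV0 : 0 ≤ V := ENNReal.toReal_nonneg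
  have hπ : (0:ℝ) < Real.pi := Real.pi_pos
  refine ⟨Real.pi⁻¹ * (4 * C₅ * (I + V + 1)), by positivity, ?_⟩
  intro Φ hΦm hΦb hΦ0 f hf _ c c'
  set g : ℂ → ℂ := fun ζ => Φ ζ (f ζ) with hg
  have hgm : Measurable g := hΦm.comp (measurable_id.prodMk hf.measurable)
  have hgb : ∀ ζ, ‖g ζ‖ ≤ C₅ := fun ζ => hΦb ζ (f ζ)
  have hg0 : ∀ ζ : ℂ, 1 ≤ ‖ζ‖ → g ζ = 0 := fun ζ h => hΦ0 ζ (f ζ) h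
  have hFi : ∀ b : ℂ, Integrable (fun ζ : ℂ => g ζ / (ζ - b)) := by
    intro b
    have hb1 : IntegrableOn (fun ζ : ℂ => ‖ζ - b‖ ^ (-(1:ℝ))) (ball (0:ℂ) 1) :=
      (integrableOn_shift (by norm_num) (by norm_num) b).1
    have hmaj : Integrable ((ball (0:ℂ) 1).indicator
        (fun ζ : ℂ => C₅ * ‖ζ - b‖ ^ (-(1:ℝ)))) :=
      IntegrableOn.integrable_indicator (hb1.const_mul C₅) measurableSet_ball
    refine Integrable.mono' hmaj
      ((hgm.div (measurable_id.sub_const b)).aestronglyMeasurable)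
      (Filter.Eventually.of_forall fun ζ => ?_)
    by_cases hζ : ζ ∈ ball (0:ℂ) 1
    · rw [indicator_of_mem hζ, norm_div, Real.rpow_neg_one, div_eq_mul_inv]
      exact mul_le_mul_of_nonneg_right (hgb ζ) (inv_nonneg.mpr (norm_nonneg _))
    · rw [indicator_of_notMem hζ]
      have h0 : g ζ = 0 := hg0 ζ (by rw [mem_ball_zero_iff, not_lt] at hζ; exact hζ)
      simp [h0]
  set δ : ℝ := ‖c - c'‖ with hδdef
  have hδ0 : 0 ≤ δ := norm_nonneg _
  have hdiff : KOp Φ f c - KOp Φ f c' =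
      -(Real.pi)⁻¹ • ∫ ζ : ℂ, (g ζ / (ζ - c) - g ζ / (ζ - c')) := by
    rw [KOp, KOp, ← smul_sub, integral_sub (hFi c) (hFi c')]
  set G : ℂ → ℝ := (ball (0:ℂ) 1).indicator
      (fun ζ => 2 * C₅ * δ ^ α * (‖ζ - c‖ ^ (-(1+α)) + ‖ζ - c'‖ ^ (-(1+α)))) with hG
  have hGint : Integrable G :=
    IntegrableOn.integrable_indicator
      (((integrableOn_shift hs0 hs2 c).1.add
        (integrableOn_shift hs0 hs2 c').1).const_mul (2*C₅*δ^α)) measurableSet_ball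
  have h1 : ∀ᵐ ζ : ℂ, ζ ≠ c := by
    rw [ae_iff]
    simp only [ne_eq, not_not, setOf_eq_eq_singleton]
    exact measure_singleton c
  have h2 : ∀ᵐ ζ : ℂ, ζ ≠ c' := by
    rw [ae_iff]
    simp only [ne_eq, not_not, setOf_eq_eq_singleton]
    exact measure_singleton c'
  have hae : ∀ᵐ ζ : ℂ, ‖g ζ / (ζ - c) - g ζ / (ζ - c')‖ ≤ G ζ := by
    filter_upwards [h1, h2] with ζ hζc hζc'
    by_cases hζ : ζ ∈ ball (0:ℂ) 1
    · rw [hG, indicator_of_mem hζ]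
      have hsc : ζ - c ≠ 0 := sub_ne_zero.mpr hζc
      have hsc' : ζ - c' ≠ 0 := sub_ne_zero.mpr hζc'
      have hrc : (0:ℝ) < ‖ζ - c‖ := norm_pos_iff.mpr hsc
      have hrc' : (0:ℝ) < ‖ζ - c'‖ := norm_pos_iff.mpr hsc'
      have hid : g ζ / (ζ - c) - g ζ / (ζ - c') =
          g ζ * ((c - c') / ((ζ - c) * (ζ - c'))) := by
        field_simp
        ring
      rw [hid, norm_mul, norm_div, norm_mul]
      have hsumr : δ ≤ ‖ζ - c‖ + ‖ζ - c'‖ := by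
        have : c - c' = (ζ - c') - (ζ - c) := by ring
        rw [hδdef, this]
        exact (norm_sub_le _ _).trans (by rw [add_comm])
      calc ‖g ζ‖ * (‖c - c'‖ / (‖ζ - c‖ * ‖ζ - c'‖))
          ≤ C₅ * (δ / (‖ζ - c‖ * ‖ζ - c'‖)) :=
            mul_le_mul_of_nonneg_right (hgb ζ) (by positivity)
        _ ≤ C₅ * (2 * δ ^ α * (‖ζ - c‖ ^ (-(1+α)) + ‖ζ - c'‖ ^ (-(1+α)))) :=
            mul_le_mul_of_nonneg_left
              (holder_pointwise hα0 hα1 δ _ _ hδ0 hrc hrc' hsumr) hC₅.le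
        _ = 2 * C₅ * δ ^ α * (‖ζ - c‖ ^ (-(1+α)) + ‖ζ - c'‖ ^ (-(1+α))) := by ring
    · rw [hG, indicator_of_notMem hζ]
      have h0 : g ζ = 0 := hg0 ζ (by rw [mem_ball_zero_iff, not_lt] at hζ; exact hζ)
      simp [h0]
  have hGval : (∫ ζ : ℂ, G ζ) ≤ 2 * C₅ * δ ^ α * (2 * (I + V)) := by
    rw [hG, integral_indicator measurableSet_ball]
    have e : (∫ ζ in ball (0:ℂ) 1,
        2 * C₅ * δ ^ α * (‖ζ - c‖ ^ (-(1+α)) + ‖ζ - c'‖ ^ (-(1+α)))) =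
        2 * C₅ * δ ^ α * ∫ ζ in ball (0:ℂ) 1,
          (‖ζ - c‖ ^ (-(1+α)) + ‖ζ - c'‖ ^ (-(1+α))) := integral_const_mul _ _
    rw [e]
    have hsplit : (∫ ζ in ball (0:ℂ) 1,
        (‖ζ - c‖ ^ (-(1+α)) + ‖ζ - c'‖ ^ (-(1+α)))) =
        (∫ ζ in ball (0:ℂ) 1, ‖ζ - c‖ ^ (-(1+α))) +
        (∫ ζ in ball (0:ℂ) 1, ‖ζ - c'‖ ^ (-(1+α))) :=
      integral_add (integrableOn_shift hs0 hs2 c).1 (integrableOn_shift hs0 hs2 c').1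
    rw [hsplit]
    have b1 := (integrableOn_shift hs0 hs2 c).2
    have b2 := (integrableOn_shift hs0 hs2 c').2
    have hconst : (0:ℝ) ≤ 2 * C₅ * δ ^ α := by positivity
    nlinarith [mul_le_mul_of_nonneg_left (add_le_add b1 b2) hconst]
  rw [hdiff, norm_smul]
  have hnrm : ‖-(Real.pi)⁻¹‖ = Real.pi⁻¹ := by
    rw [norm_neg, Real.norm_eq_abs, abs_of_nonneg (inv_nonneg.mpr hπ.le)]
  rw [hnrm]
  calc Real.pi⁻¹ * ‖∫ ζ : ℂ, (g ζ / (ζ - c) - g ζ / (ζ - c'))‖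
      ≤ Real.pi⁻¹ * ∫ ζ : ℂ, ‖g ζ / (ζ - c) - g ζ / (ζ - c')‖ := by
        gcongr
        exact norm_integral_le_integral_norm _
    _ ≤ Real.pi⁻¹ * ∫ ζ : ℂ, G ζ := by
        exact mul_le_mul_of_nonneg_left (integral_mono_of_nonneg
          (Filter.Eventually.of_forall fun ζ => norm_nonneg _) hGint hae) (inv_nonneg.mpr hπ.le)
    _ ≤ Real.pi⁻¹ * (2 * C₅ * δ ^ α * (2 * (I + V))) := by gcongr
    _ ≤ Real.pi⁻¹ * (4 * C₅ * (I + V + 1)) * δ ^ α := by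
        have e : Real.pi⁻¹ * (2 * C₅ * δ ^ α * (2 * (I + V))) =
            Real.pi⁻¹ * (4 * C₅ * (I + V)) * δ ^ α := by ring
        rw [e]
        have h4 : 4 * C₅ * (I + V) ≤ 4 * C₅ * (I + V + 1) := by nlinarith
        have hδα : (0:ℝ) ≤ δ ^ α := Real.rpow_nonneg hδ0 _
        exact mul_le_mul_of_nonneg_right
          (mul_le_mul_of_nonneg_left h4 (inv_nonneg.mpr hπ.le)) hδα
end

section
/- Let ε ≥ 0 and 0 < r < 1, and let s : [0, r] → ℝ be differentiable with 0 < s(t) < 1 for all t ∈ [0, r] and satisfying the differential inequality s′(t) ≤ ((2 + ε)/(1 − t²)) · s(t) · log(1/s(t)) for all t ∈ [0, r]. Then s(t) ≤ s(0)^{((1 − t)/(1 + t))^{1 + ε/2}} for all t ∈ [0, r]. -/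
/-- Differential-inequality comparison. Let `ε ≥ 0`, `0 < r < 1`, and let
`s` be differentiable on `[0, r]` with `0 < s(t) < 1` there and
`s'(t) ≤ ((2 + ε)/(1 - t²)) s(t) log(1/s(t))`. Then
`s(t) ≤ s(0) ^ (((1 - t)/(1 + t))^(1 + ε/2))` for all `t ∈ [0, r]`. -/
theorem differential_inequality_comparison
    (ε r : ℝ) (hε : 0 ≤ ε) (hr0 : 0 < r) (hr1 : r < 1)
    (s s' : ℝ → ℝ)
    (hderiv : ∀ t ∈ Set.Icc (0 : ℝ) r, HasDerivAt s (s' t) t)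
    (hpos : ∀ t ∈ Set.Icc (0 : ℝ) r, 0 < s t)
    (hlt1 : ∀ t ∈ Set.Icc (0 : ℝ) r, s t < 1)
    (hineq : ∀ t ∈ Set.Icc (0 : ℝ) r,
      s' t ≤ (2 + ε) / (1 - t ^ 2) * (s t * Real.log (1 / s t))) :
    ∀ t ∈ Set.Icc (0 : ℝ) r,
      s t ≤ s 0 ^ (((1 - t) / (1 + t)) ^ (1 + ε / 2)) := by
  have h0mem : (0 : ℝ) ∈ Set.Icc (0 : ℝ) r := ⟨le_refl 0, hr0.le⟩
  have hs0 := hpos 0 h0mem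
  have hL : ∀ x ∈ Set.Icc (0:ℝ) r, 0 < Real.log (1 / s x) := by
    intro x hx
    rw [one_div, Real.log_inv]
    have h1 := hpos x hx
    have h2 := hlt1 x hx
    have := Real.log_neg h1 h2
    linarith
  set F : ℝ → ℝ := fun x => Real.log (Real.log (1 / s x)) +
      (1 + ε / 2) * (Real.log (1 + x) - Real.log (1 - x)) with hF
  have hFd : ∀ x ∈ Set.Icc (0:ℝ) r, HasDerivAt F
      (-(s' x / s x) / Real.log (1 / s x)
        + (1 + ε / 2) * (1 / (1 + x) - (-1) / (1 - x))) x := by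
    intro x hx
    have hsx := hpos x hx
    have h1t : (0:ℝ) < 1 - x := by have := hx.2; linarith
    have h1t' : (0:ℝ) < 1 + x := by have := hx.1; linarith
    have h1 : HasDerivAt (fun y => Real.log (1 / s y)) (-(s' x / s x)) x := by
      have h : HasDerivAt (fun y => -Real.log (s y)) (-(s' x / s x)) x :=
        ((hderiv x hx).log hsx.ne').neg
      simpa [one_div, Real.log_inv] using h
    have h2 := h1.log (hL x hx).ne'
    have h3 : HasDerivAt (fun y => Real.log (1 + y)) (1 / (1 + x)) x := by
      have h : HasDerivAt (fun y : ℝ => 1 + y) 1 x := (hasDerivAt_id x).const_add 1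
      simpa using h.log h1t'.ne'
    have h4 : HasDerivAt (fun y => Real.log (1 - y)) ((-1) / (1 - x)) x := by
      have h : HasDerivAt (fun y : ℝ => 1 - y) (-1) x := (hasDerivAt_id x).const_sub 1
      simpa using h.log h1t.ne'
    exact h2.add ((h3.sub h4).const_mul (1 + ε / 2))
  have hmono : MonotoneOn F (Set.Icc 0 r) := by
    apply monotoneOn_of_deriv_nonneg (convex_Icc 0 r)
    · intro x hx
      exact ((hFd x hx).continuousAt).continuousWithinAt
    · intro x hx
      rw [interior_Icc] at hx
      exact ((hFd x (Set.Ioo_subset_Icc_self hx)).differentiableAt).differentiableWithinAt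
    · intro x hx
      rw [interior_Icc] at hx
      have hx' := Set.Ioo_subset_Icc_self hx
      rw [(hFd x hx').deriv]
      have hsx := hpos x hx'
      have hLx := hL x hx'
      have h1t : (0:ℝ) < 1 - x := by have := hx'.2; linarith
      have h1t' : (0:ℝ) < 1 + x := by have := hx'.1; linarith
      have key : s' x / (s x * Real.log (1 / s x)) ≤ (2 + ε) / ((1 - x) * (1 + x)) := by
        rw [div_le_iff₀ (by positivity)]
        have h := hineq x hx'
        have h12 : (1 : ℝ) - x ^ 2 = (1 - x) * (1 + x) := by ring
        rw [h12] at h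
        linarith
      have heq : (2 + ε) / ((1 - x) * (1 + x))
          = (1 + ε / 2) * (1 / (1 + x) - (-1) / (1 - x)) := by
        field_simp
        ring
      rw [heq] at key
      rw [neg_div, div_div]
      linarith
  intro t ht
  obtain ⟨ht0, htr⟩ := ht
  have htmem : t ∈ Set.Icc (0:ℝ) r := ⟨ht0, htr⟩
  have hmF := hmono h0mem htmem ht0
  have hL0 := hL 0 h0mem
  have hLt := hL t htmem
  have h1t : (0:ℝ) < 1 - t := by linarith
  have h1t' : (0:ℝ) < 1 + t := by linarith
  set c := ((1 - t) / (1 + t)) ^ (1 + ε / 2) with hc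
  have hcpos : 0 < c := Real.rpow_pos_of_pos (by positivity) _
  have hmF' : Real.log (Real.log (1 / s 0))
      ≤ Real.log (Real.log (1 / s t))
        + (1 + ε / 2) * (Real.log (1 + t) - Real.log (1 - t)) := by
    have h : F 0 ≤ F t := hmF
    simp only [hF, add_zero, sub_zero, Real.log_one, sub_self, mul_zero] at h
    linarith [h]
  have hlog : Real.log (Real.log (1 / s 0) * c) ≤ Real.log (Real.log (1 / s t)) := by
    rw [Real.log_mul hL0.ne' hcpos.ne', hc, Real.log_rpow (by positivity),
      Real.log_div h1t.ne' h1t'.ne']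
    nlinarith [hmF']
  have hLineq : Real.log (1 / s 0) * c ≤ Real.log (1 / s t) :=
    (Real.log_le_log_iff (by positivity) hLt).mp hlog
  rw [one_div, Real.log_inv, one_div, Real.log_inv] at hLineq
  have hfinal : Real.log (s t) ≤ Real.log (s 0 ^ c) := by
    rw [Real.log_rpow hs0]
    nlinarith [hLineq]
  exact (Real.log_le_log_iff (hpos t htmem) (Real.rpow_pos_of_pos hs0 c)).mp hfinal
end

section
/- If τ ≥ 1/rⁿ, then for every w ∈ ℂ with Re w ≥ τ one has |w^{−1/n}| ≤ r, so F(w) is defined, and Re F(w) ≥ Re w + 1/2. In particular F maps R_τ into R_τ. -/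
/-- The map `F(w) = w + 1 + η(w^{-1/n})`, where `w^{-1/n} = exp(-(Log w)/n)` is taken
with the principal branch of the logarithm. -/
noncomputable def fatouF (n : ℕ) (η : ℂ → ℂ) (w : ℂ) : ℂ :=
  w + 1 + η (Complex.exp (-(Complex.log w) / (n : ℂ)))

/-- with `n ≥ 1`, `0 < r < 1`, `η(0) = 0` and `|η(ξ)| ≤ 1/2` for
`|ξ| ≤ r`: if `τ ≥ 1/rⁿ`, then for every `w` with `Re w ≥ τ` one has `|w^{-1/n}| ≤ r`
(so `F(w)` is defined) and `Re F(w) ≥ Re w + 1/2`; in particular `F` maps the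
half-plane `R_τ` into itself. -/
theorem fatouF_maps_halfPlane
    (n : ℕ) (hn : 1 ≤ n) (r : ℝ) (hr0 : 0 < r) (hr1 : r < 1)
    (η : ℂ → ℂ)
    (hη0 : η 0 = 0)
    (hηbdd : ∀ ξ : ℂ, ‖ξ‖ ≤ r → ‖η ξ‖ ≤ 1 / 2)
    (τ : ℝ) (hτ : 1 / r ^ n ≤ τ) :
    (∀ w : ℂ, τ ≤ w.re →
      ‖Complex.exp (-(Complex.log w) / (n : ℂ))‖ ≤ r ∧
      w.re + 1 / 2 ≤ (fatouF n η w).re) ∧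
    Set.MapsTo (fatouF n η) {w : ℂ | τ < w.re} {w : ℂ | τ < w.re} := by
  have hrn : (0:ℝ) < r ^ n := pow_pos hr0 n
  have hτ0 : (0:ℝ) < τ := lt_of_lt_of_le (by positivity) hτ
  have main : ∀ w : ℂ, τ ≤ w.re →
      ‖Complex.exp (-(Complex.log w) / (n : ℂ))‖ ≤ r ∧
      w.re + 1 / 2 ≤ (fatouF n η w).re := by
    intro w hw
    have hwre : (0:ℝ) < w.re := lt_of_lt_of_le hτ0 hw
    have habs : 1 / r ^ n ≤ ‖w‖ :=
      le_trans (le_trans hτ hw) (Complex.re_le_norm w)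
    have habs0 : (0:ℝ) < ‖w‖ := lt_of_lt_of_le (by positivity) habs
    have hn0 : (0:ℝ) < (n:ℝ) := by exact_mod_cast hn
    -- compute the modulus
    have hre : (-(Complex.log w) / (n : ℂ)).re = -(Real.log (‖w‖)) / n := by
      rw [Complex.div_re]
      have hne : ((n:ℝ)) ≠ 0 := by positivity
      simp [Complex.log_re, Complex.normSq_natCast]
      field_simp
    have hmod : ‖Complex.exp (-(Complex.log w) / (n : ℂ))‖
        = Real.exp (-(Real.log (‖w‖)) / n) := by
      rw [Complex.norm_exp, hre]
    have hlog : Real.log (1 / r ^ n) ≤ Real.log (‖w‖) :=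
      Real.log_le_log (by positivity) habs
    have hlog' : -(n:ℝ) * Real.log r ≤ Real.log (‖w‖) := by
      have : Real.log (1 / r ^ n) = -(n:ℝ) * Real.log r := by
        rw [Real.log_div one_ne_zero (ne_of_gt hrn), Real.log_pow]
        simp
      linarith [this ▸ hlog]
    have hmle : ‖Complex.exp (-(Complex.log w) / (n : ℂ))‖ ≤ r := by
      rw [hmod]
      calc Real.exp (-(Real.log (‖w‖)) / n)
          ≤ Real.exp (Real.log r) := by
            apply Real.exp_le_exp.2
            rw [div_le_iff₀ hn0]
            nlinarith
        _ = r := Real.exp_log hr0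
    refine ⟨hmle, ?_⟩
    have hηle := hηbdd _ hmle
    have : -(1/2 : ℝ) ≤ (η (Complex.exp (-(Complex.log w) / (n : ℂ)))).re := by
      have := abs_le.1 (le_trans (Complex.abs_re_le_norm _) hηle)
      linarith [this.1]
    simp only [fatouF, Complex.add_re, Complex.one_re]
    linarith
  refine ⟨main, ?_⟩
  intro w hw
  have h := (main w (le_of_lt hw)).2
  simp only [Set.mem_setOf_eq] at hw ⊢
  linarith
end
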